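/- (Policy update identity for MDPs.) For a finite discounted MDP and any two policies π and π†, the difference in expected discounted return from initial distribution ρ₀ equals the discounted-visitation-weighted sum of advantages: u(π†) = u(π) + Σ_s ρ_{π†}(s) Σ_a π†(a|s) A_π(s,a), where ρ_{π†}(s) = Σ_k γ^k P(s_k = s | π†, ρ₀) and A_π(s,a) = Q_π(s,a) − V_π(s). -/
import Mathlib


/-- Policy update identity for finite discounted MDPs:
`u(π†) = u(π) + ∑_s ρ_{π†}(s) ∑_a π†(a|s) A_π(s,a)`, where values satisfy the
Bellman equations and `ρ_{π†}` the discounted-visitation equation. -/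
theorem stmt17 {S A : Type*} [Fintype S] [Fintype A]
    (P : S → A → S → ℝ) (hP : ∀ s a, (∀ s', 0 ≤ P s a s') ∧ ∑ s', P s a s' = 1)
    (r : S → A → ℝ) (γ : ℝ) (hγ : γ ∈ Set.Ioo (0:ℝ) 1)
    (ρ0 : S → ℝ) (hρ0 : (∀ s, 0 ≤ ρ0 s) ∧ ∑ s, ρ0 s = 1)
    (π πd : S → A → ℝ)
    (hπ : ∀ s, (∀ a, 0 ≤ π s a) ∧ ∑ a, π s a = 1)
    (hπd : ∀ s, (∀ a, 0 ≤ πd s a) ∧ ∑ a, πd s a = 1)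
    (V Vd : S → ℝ)
    (hV : ∀ s, V s = ∑ a, π s a * (r s a + γ * ∑ s', P s a s' * V s'))
    (hVd : ∀ s, Vd s = ∑ a, πd s a * (r s a + γ * ∑ s', P s a s' * Vd s'))
    (Q : S → A → ℝ) (hQ : ∀ s a, Q s a = r s a + γ * ∑ s', P s a s' * V s')
    (ρd : S → ℝ)
    (hρd : ∀ s, ρd s = ρ0 s + γ * ∑ s', ρd s' * ∑ a, πd s' a * P s' a s) :
    ∑ s, ρ0 s * Vd s =
      (∑ s, ρ0 s * V s) + ∑ s, ρd s * ∑ a, πd s a * (Q s a - V s) := by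
  -- pointwise key identity
  have key : ∀ s, ∑ a, πd s a * (Q s a - V s)
      = (Vd s - V s) - γ * ∑ s', (∑ a, πd s a * P s a s') * (Vd s' - V s') := by
    intro s
    have h1 := (hπd s).2
    have h2 := hVd s
    have e1 : ∀ a ∈ Finset.univ, πd s a * (Q s a - V s)
        = (πd s a * (r s a + γ * ∑ s', P s a s' * Vd s')
          - γ * ∑ s', πd s a * P s a s' * (Vd s' - V s')) - πd s a * V s := by
      intro a _
      rw [hQ s a]
      have : (∑ s', πd s a * P s a s' * (Vd s' - V s'))
          = πd s a * (∑ s', P s a s' * Vd s') - πd s a * ∑ s', P s a s' * V s' := by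
        simp only [Finset.mul_sum, ← Finset.sum_sub_distrib]
        apply Finset.sum_congr rfl; intros; ring
      rw [this]; ring
    rw [Finset.sum_congr rfl e1, Finset.sum_sub_distrib, Finset.sum_sub_distrib,
        ← h2, ← Finset.sum_mul, h1, one_mul, ← Finset.mul_sum, Finset.sum_comm]
    have e3 : ∑ s', ∑ a, πd s a * P s a s' * (Vd s' - V s')
        = ∑ s', (∑ a, πd s a * P s a s') * (Vd s' - V s') := by
      apply Finset.sum_congr rfl; intro s' _
      rw [Finset.sum_mul]
    rw [e3]; ring
  have swap : ∑ s, ρd s * ∑ s', (∑ a, πd s a * P s a s') * (Vd s' - V s')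
      = ∑ s', (∑ s, ρd s * ∑ a, πd s a * P s a s') * (Vd s' - V s') := by
    have h4 : ∀ s, ρd s * ∑ s', (∑ a, πd s a * P s a s') * (Vd s' - V s')
        = ∑ s', ρd s * ((∑ a, πd s a * P s a s') * (Vd s' - V s')) :=
      fun s => Finset.mul_sum _ _ _
    rw [Finset.sum_congr rfl (fun s _ => h4 s), Finset.sum_comm]
    apply Finset.sum_congr rfl; intro s' _
    rw [Finset.sum_mul]
    apply Finset.sum_congr rfl; intros; ring
  have main : ∑ s, ρd s * ∑ a, πd s a * (Q s a - V s)
      = ∑ s, ρ0 s * (Vd s - V s) := by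
    calc ∑ s, ρd s * ∑ a, πd s a * (Q s a - V s)
        = ∑ s, (ρd s * (Vd s - V s)
            - ρd s * (γ * ∑ s', (∑ a, πd s a * P s a s') * (Vd s' - V s'))) := by
          apply Finset.sum_congr rfl; intro s _; rw [key s]; ring
      _ = ∑ s, ρd s * (Vd s - V s)
            - γ * ∑ s, ρd s * ∑ s', (∑ a, πd s a * P s a s') * (Vd s' - V s') := by
          rw [Finset.sum_sub_distrib, Finset.mul_sum]
          congr 1; apply Finset.sum_congr rfl; intros; ring
      _ = ∑ s, ρd s * (Vd s - V s)
            - ∑ s', (γ * ∑ s, ρd s * ∑ a, πd s a * P s a s') * (Vd s' - V s') := by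
          rw [swap, Finset.mul_sum]
          congr 1; apply Finset.sum_congr rfl; intros; ring
      _ = ∑ s, ρ0 s * (Vd s - V s) := by
          rw [← Finset.sum_sub_distrib]
          apply Finset.sum_congr rfl; intro s' _
          have := hρd s'
          have h3 : γ * ∑ s, ρd s * ∑ a, πd s a * P s a s' = ρd s' - ρ0 s' := by
            linarith
          rw [h3]; ring
  have final : ∑ s, ρ0 s * (Vd s - V s) = ∑ s, ρ0 s * Vd s - ∑ s, ρ0 s * V s := by
    rw [← Finset.sum_sub_distrib]; apply Finset.sum_congr rfl; intros; ring
  rw [main, final]; ring
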